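/- Let H be a finite-dimensional real Hilbert space and T : H → H nonexpansive with Fix(T) ≠ ∅. For any sequence (μ_k) ⊂ [0,1] with Σ_k μ_k(1−μ_k) = ∞ and any x₀ ∈ H, the sequence x_{k+1} = (1−μ_k)x_k + μ_k T(x_k) converges to a point in Fix(T). -/

import Mathlib

open Filter Topology

lemma km_norm_sq_identity {H : Type*} [NormedAddCommGroup H] [InnerProductSpace ℝ H]
    (a b : H) (t : ℝ) :
    ‖(1 - t) • a + t • b‖ ^ 2
      = (1 - t) * ‖a‖ ^ 2 + t * ‖b‖ ^ 2 - t * (1 - t) * ‖a - b‖ ^ 2 := by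
  have h : ∀ v : H, ‖v‖ ^ 2 = (inner ℝ v v : ℝ) := fun v => (real_inner_self_eq_norm_sq v).symm
  rw [h, h, h, h]
  simp only [inner_add_left, inner_add_right, inner_sub_left, inner_sub_right,
    real_inner_smul_left, real_inner_smul_right]
  rw [real_inner_comm b a]
  ring

/-- Krasnosel'skiĭ–Mann iteration of a nonexpansive map with a fixed
point converges to a fixed point. -/
theorem stmt_17 {H : Type*} [NormedAddCommGroup H] [InnerProductSpace ℝ H]
    [FiniteDimensional ℝ H]
    (T : H → H) (hT : ∀ x y : H, ‖T x - T y‖ ≤ ‖x - y‖) (hfix : ∃ x, T x = x)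
    (μ : ℕ → ℝ) (hμ : ∀ k, μ k ∈ Set.Icc (0 : ℝ) 1)
    (hdiv : Tendsto (fun n => ∑ k ∈ Finset.range n, μ k * (1 - μ k)) atTop atTop)
    (x : ℕ → H)
    (hrec : ∀ k, x (k + 1) = (1 - μ k) • x k + μ k • T (x k)) :
    ∃ p : H, T p = p ∧ Tendsto x atTop (nhds p) := by
  obtain ⟨p, hp⟩ := hfix
  -- key quantitative decrease for any fixed point
  have key : ∀ p' : H, T p' = p' → ∀ k,
      ‖x (k + 1) - p'‖ ^ 2
        ≤ ‖x k - p'‖ ^ 2 - μ k * (1 - μ k) * ‖T (x k) - x k‖ ^ 2 := by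
    intro p' hp' k
    obtain ⟨hμ0, hμ1⟩ := hμ k
    have h1 : x (k + 1) - p' = (1 - μ k) • (x k - p') + μ k • (T (x k) - p') := by
      rw [hrec k]; module
    rw [h1, km_norm_sq_identity]
    have hTp : ‖T (x k) - p'‖ ≤ ‖x k - p'‖ := by
      conv_lhs => rw [← hp']
      exact hT _ _
    have e2 : ‖(x k - p') - (T (x k) - p')‖ = ‖T (x k) - x k‖ := by
      rw [show (x k - p') - (T (x k) - p') = -(T (x k) - x k) by abel, norm_neg]
    rw [e2]
    nlinarith [mul_le_mul hTp hTp (norm_nonneg _) (norm_nonneg _), hμ0,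
      norm_nonneg (T (x k) - p'), norm_nonneg (x k - p')]
  -- Fejér monotonicity (norm version)
  have fejer : ∀ p' : H, T p' = p' → ∀ k, ‖x (k + 1) - p'‖ ≤ ‖x k - p'‖ := by
    intro p' hp' k
    obtain ⟨hμ0, hμ1⟩ := hμ k
    have hk := key p' hp' k
    have h0 : 0 ≤ μ k * (1 - μ k) * ‖T (x k) - x k‖ ^ 2 :=
      mul_nonneg (mul_nonneg hμ0 (by linarith)) (sq_nonneg _)
    nlinarith [norm_nonneg (x (k + 1) - p'), norm_nonneg (x k - p')]
  have fejer_ant : ∀ p' : H, T p' = p' → Antitone fun k => ‖x k - p'‖ := fun p' hp' =>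
    antitone_nat_of_succ_le (fun k => fejer p' hp' k)
  -- the residual is nonincreasing
  have hres : Antitone fun k => ‖T (x k) - x k‖ := by
    apply antitone_nat_of_succ_le
    intro k
    obtain ⟨hμ0, hμ1⟩ := hμ k
    have h1 : ‖x (k + 1) - x k‖ = μ k * ‖T (x k) - x k‖ := by
      rw [show x (k + 1) - x k = μ k • (T (x k) - x k) by rw [hrec k]; module,
        norm_smul, Real.norm_eq_abs, abs_of_nonneg hμ0]
    have h2 : ‖T (x k) - x (k + 1)‖ = (1 - μ k) * ‖T (x k) - x k‖ := by
      rw [show T (x k) - x (k + 1) = (1 - μ k) • (T (x k) - x k) by rw [hrec k]; module,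
        norm_smul, Real.norm_eq_abs, abs_of_nonneg (by linarith)]
    calc ‖T (x (k + 1)) - x (k + 1)‖
        ≤ ‖T (x (k + 1)) - T (x k)‖ + ‖T (x k) - x (k + 1)‖ :=
          norm_sub_le_norm_sub_add_norm_sub _ _ _
      _ ≤ ‖x (k + 1) - x k‖ + ‖T (x k) - x (k + 1)‖ := by gcongr; exact hT _ _
      _ = ‖T (x k) - x k‖ := by rw [h1, h2]; ring
  -- sum bound
  have sum_le : ∀ n, ∑ k ∈ Finset.range n, μ k * (1 - μ k) * ‖T (x k) - x k‖ ^ 2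
      ≤ ‖x 0 - p‖ ^ 2 := by
    intro n
    calc ∑ k ∈ Finset.range n, μ k * (1 - μ k) * ‖T (x k) - x k‖ ^ 2
        ≤ ∑ k ∈ Finset.range n, (‖x k - p‖ ^ 2 - ‖x (k + 1) - p‖ ^ 2) := by
          apply Finset.sum_le_sum
          intro k _
          have := key p hp k
          linarith
      _ = ‖x 0 - p‖ ^ 2 - ‖x n - p‖ ^ 2 := Finset.sum_range_sub' (fun k => ‖x k - p‖ ^ 2) n
      _ ≤ ‖x 0 - p‖ ^ 2 := by nlinarith [norm_nonneg (x n - p)]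
  set C := ‖x 0 - p‖ ^ 2 with hC
  have hC0 : 0 ≤ C := sq_nonneg _
  -- residual tends to zero
  have hr0 : Tendsto (fun k => ‖T (x k) - x k‖) atTop (𝓝 0) := by
    rw [Metric.tendsto_atTop]
    intro ε hε
    obtain ⟨N, hN⟩ := (hdiv.eventually_ge_atTop (C / ε ^ 2 + 1)).exists
    refine ⟨N, fun n hn => ?_⟩
    have hiter : ‖T (x N) - x N‖ ^ 2 * (∑ k ∈ Finset.range N, μ k * (1 - μ k)) ≤ C := by
      calc ‖T (x N) - x N‖ ^ 2 * ∑ k ∈ Finset.range N, μ k * (1 - μ k)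
          = ∑ k ∈ Finset.range N, μ k * (1 - μ k) * ‖T (x N) - x N‖ ^ 2 := by
            rw [Finset.mul_sum]; exact Finset.sum_congr rfl (fun k _ => by ring)
        _ ≤ ∑ k ∈ Finset.range N, μ k * (1 - μ k) * ‖T (x k) - x k‖ ^ 2 := by
            apply Finset.sum_le_sum
            intro k hk
            obtain ⟨h0, h1⟩ := hμ k
            have hle : ‖T (x N) - x N‖ ≤ ‖T (x k) - x k‖ :=
              hres (Nat.le_of_lt (Finset.mem_range.mp hk))
            have hnn := norm_nonneg (T (x N) - x N)
            have hc : 0 ≤ μ k * (1 - μ k) := mul_nonneg h0 (by linarith)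
            have hsq : ‖T (x N) - x N‖ ^ 2 ≤ ‖T (x k) - x k‖ ^ 2 := by nlinarith
            exact mul_le_mul_of_nonneg_left hsq hc
        _ ≤ C := sum_le N
    have hrN : ‖T (x N) - x N‖ < ε := by
      by_contra hcon
      push_neg at hcon
      have hS : (C / ε ^ 2 + 1) ≤ ∑ k ∈ Finset.range N, μ k * (1 - μ k) := hN
      have h1 : ε ^ 2 ≤ ‖T (x N) - x N‖ ^ 2 := by nlinarith
      have hS0 : (0 : ℝ) < ∑ k ∈ Finset.range N, μ k * (1 - μ k) := by
        have : (0 : ℝ) < C / ε ^ 2 + 1 := by positivity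
        linarith
      have h2 : ε ^ 2 * (C / ε ^ 2 + 1) = C + ε ^ 2 := by field_simp
      have h3 := mul_le_mul_of_nonneg_left hS (le_of_lt (by positivity : (0 : ℝ) < ε ^ 2))
      have h4 := mul_le_mul_of_nonneg_right h1 (le_of_lt hS0)
      nlinarith
    have : ‖T (x n) - x n‖ ≤ ‖T (x N) - x N‖ := hres hn
    rw [Real.dist_eq, sub_zero, abs_of_nonneg (norm_nonneg _)]
    linarith
  -- boundedness and convergent subsequence
  have hbd : ∀ k, x k ∈ Metric.closedBall p ‖x 0 - p‖ := by
    intro k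
    rw [Metric.mem_closedBall, dist_eq_norm]
    exact fejer_ant p hp (Nat.zero_le k)
  obtain ⟨q, -, φ, hφ, hconv⟩ :=
    tendsto_subseq_of_bounded Metric.isBounded_closedBall hbd
  -- continuity of T
  have hTcont : Continuous T := by
    have : LipschitzWith 1 T := by
      apply LipschitzWith.of_dist_le_mul
      intro a b
      rw [dist_eq_norm, dist_eq_norm, NNReal.coe_one, one_mul]
      exact hT a b
    exact this.continuous
  -- the limit is a fixed point
  have hq : T q = q := by
    have h1 : Tendsto (fun j => T (x (φ j))) atTop (𝓝 (T q)) :=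
      (hTcont.tendsto q).comp hconv
    have h2 : Tendsto (fun j => T (x (φ j)) - x (φ j)) atTop (𝓝 (T q - q)) :=
      h1.sub hconv
    have h3 : Tendsto (fun j => ‖T (x (φ j)) - x (φ j)‖) atTop (𝓝 ‖T q - q‖) := h2.norm
    have h4 : Tendsto (fun j => ‖T (x (φ j)) - x (φ j)‖) atTop (𝓝 0) :=
      hr0.comp hφ.tendsto_atTop
    have := tendsto_nhds_unique h3 h4
    rw [← sub_eq_zero]
    exact norm_eq_zero.mp this
  -- full convergence to q
  refine ⟨q, hq, ?_⟩
  have dant : Antitone fun k => ‖x k - q‖ := fejer_ant q hq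
  have hbdd : BddBelow (Set.range fun k => ‖x k - q‖) :=
    ⟨0, fun y ⟨k, hk⟩ => hk ▸ norm_nonneg _⟩
  have hdto : Tendsto (fun k => ‖x k - q‖) atTop (𝓝 (⨅ k, ‖x k - q‖)) :=
    tendsto_atTop_ciInf dant hbdd
  have hsub : Tendsto (fun j => ‖x (φ j) - q‖) atTop (𝓝 0) := by
    have : Tendsto (fun j => x (φ j) - q) atTop (𝓝 (q - q)) := hconv.sub tendsto_const_nhds
    rw [sub_self] at this
    simpa using this.norm
  have hsub' : Tendsto (fun j => ‖x (φ j) - q‖) atTop (𝓝 (⨅ k, ‖x k - q‖)) :=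
    hdto.comp hφ.tendsto_atTop
  have hinf : (⨅ k, ‖x k - q‖) = 0 := tendsto_nhds_unique hsub' hsub
  rw [tendsto_iff_norm_sub_tendsto_zero]
  rwa [hinf] at hdto
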